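/- Let m ≥ 3 be an integer and let β be an element of order 2^m + 1 in the algebraic closure of F_2. If m is even, then there do not exist three pairwise distinct elements u_1, u_2, u_3 of the group generated by β, all different from 1, with 1 + u_1 + u_2 + u_3 = 0. Equivalently, the elementary symmetric polynomial condition: there is no 4-subset {v_1,v_2,v_3,v_4} of U_{2^m+1} with v_1 + v_2 + v_3 + v_4 = 0. -/
import Mathlib

lemma aux_no_four {K : Type*} [Field K] [Fintype K] (hchar : ringChar K = 2) (m : ℕ)
    (v : Fin 4 → K) (hinj : Function.Injective v)
    (hu : ∀ i, (v i) ^ (2 ^ m + 1) = 1) (hsum : ∑ i, v i = 0) : False := by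
  haveI : CharP K 2 := hchar ▸ ringChar.charP K
  have htwo : (2 : K) = 0 := CharTwo.two_eq_zero
  set a := v 0 with ha; set b := v 1 with hb; set c := v 2 with hc; set d := v 3 with hd
  have h1 : a + b + c + d = 0 := by rw [Fin.sum_univ_four] at hsum; exact hsum
  have hne : ∀ i : Fin 4, v i ≠ 0 := by
    intro i h
    have := hu i
    rw [h] at this
    simp at this
  have hinv : ∀ i : Fin 4, (v i) ^ (2 ^ m) = (v i)⁻¹ := by
    intro i
    refine eq_inv_of_mul_eq_one_left ?_
    rw [← pow_succ]
    exact hu i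
  have hsum2 : a⁻¹ + b⁻¹ + c⁻¹ + d⁻¹ = 0 := by
    have h0 : (a + b + c + d) ^ (2 ^ m) = 0 := by
      rw [h1]; exact zero_pow (by positivity)
    rw [add_pow_char_pow, add_pow_char_pow, add_pow_char_pow, hinv 0, hinv 1, hinv 2, hinv 3]
      at h0
    exact h0
  have h3 : b * c * d + a * c * d + a * b * d + a * b * c = 0 := by
    have hxa : a * a⁻¹ = 1 := mul_inv_cancel₀ (hne 0)
    have hxb : b * b⁻¹ = 1 := mul_inv_cancel₀ (hne 1)
    have hxc : c * c⁻¹ = 1 := mul_inv_cancel₀ (hne 2)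
    have hxd : d * d⁻¹ = 1 := mul_inv_cancel₀ (hne 3)
    linear_combination (a*b*c*d)*hsum2 - (b*c*d)*hxa - (a*c*d)*hxb - (a*b*d)*hxc - (a*b*c)*hxd
  set e2 : K := a*b + a*c + a*d + b*c + b*d + c*d with he2
  set e4 : K := a*b*c*d with he4
  obtain ⟨s, hs⟩ := FiniteField.isSquare_of_char_two hchar e2
  obtain ⟨t, ht⟩ := FiniteField.isSquare_of_char_two hchar e4
  have quad : ∀ x : K, x^4 + e2*x^2 + e4 = 0 → x^2 + s*x + t = 0 := by
    intro x hx
    have hsq : (x^2 + s*x + t)^2 = 0 := by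
      linear_combination hx - x^2*hs - ht + (s*x^3 + t*x^2 + s*t*x)*htwo
    exact pow_eq_zero_iff (two_ne_zero) |>.mp hsq
  have qa : a^2 + s*a + t = 0 := quad a (by linear_combination a^3*h1 + a*h3)
  have qb : b^2 + s*b + t = 0 := quad b (by linear_combination b^3*h1 + b*h3)
  have qc : c^2 + s*c + t = 0 := quad c (by linear_combination c^3*h1 + c*h3)
  have pair : ∀ x y : K, x^2 + s*x + t = 0 → y^2 + s*y + t = 0 → x ≠ y → x + y = -s := by
    intro x y hx hy hxy
    have : (x - y) * (x + y + s) = 0 := by linear_combination hx - hy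
    rcases mul_eq_zero.mp this with h | h
    · exact absurd (sub_eq_zero.mp h) hxy
    · linear_combination h
  have hab : a + b = -s := pair a b qa qb (fun h => by
    exact absurd (hinj h) (by decide))
  have hac : a + c = -s := pair a c qa qc (fun h => by
    exact absurd (hinj h) (by decide))
  have : b = c := by linear_combination hab - hac
  exact absurd (hinj this) (by decide)

/-- For even `m ≥ 3` there is no weight-4 relation `1 + u₁ + u₂ + u₃ = 0`
among pairwise distinct elements (different from 1) of the cyclic group of
order `2^m + 1` in `F_{2^{2m}}^*`; equivalently, no 4-subset of `U_{2^m+1}`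
sums to zero. -/
theorem no_weight_four_relation_binary (m : ℕ) (hm : 3 ≤ m) (hmeven : Even m)
    {K : Type*} [Field K] [Fintype K] (hcard : Fintype.card K = 2 ^ (2 * m))
    (β : K) (hβ : orderOf β = 2 ^ m + 1) :
    (¬ ∃ u₁ u₂ u₃ : K, (∃ k : ℕ, u₁ = β ^ k) ∧ (∃ k : ℕ, u₂ = β ^ k) ∧
      (∃ k : ℕ, u₃ = β ^ k) ∧ u₁ ≠ u₂ ∧ u₁ ≠ u₃ ∧ u₂ ≠ u₃ ∧
      u₁ ≠ 1 ∧ u₂ ≠ 1 ∧ u₃ ≠ 1 ∧ 1 + u₁ + u₂ + u₃ = 0) ∧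
    (¬ ∃ v : Fin 4 → K, Function.Injective v ∧
      (∀ i, (v i) ^ (2 ^ m + 1) = 1) ∧ (∑ i, v i) = 0) := by
  have hchar : ringChar K = 2 := by
    obtain ⟨n, hp, hc⟩ := FiniteField.card K (ringChar K)
    rw [hcard] at hc
    have hdvd : ringChar K ∣ 2 ^ (2 * m) := by
      rw [hc]; exact dvd_pow_self _ n.ne_zero
    have := hp.dvd_of_dvd_pow hdvd
    exact (Nat.prime_dvd_prime_iff_eq hp Nat.prime_two).mp this
  have hβ1 : β ^ (2 ^ m + 1) = 1 := by rw [← hβ]; exact pow_orderOf_eq_one β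
  have hpow : ∀ x : K, (∃ k : ℕ, x = β ^ k) → x ^ (2 ^ m + 1) = 1 := by
    rintro x ⟨k, rfl⟩
    rw [← pow_mul, mul_comm, pow_mul, hβ1, one_pow]
  constructor
  · rintro ⟨u₁, u₂, u₃, hk1, hk2, hk3, h12, h13, h23, h1, h2, h3, hrel⟩
    refine aux_no_four hchar m ![1, u₁, u₂, u₃] ?_ ?_ ?_
    · intro i j hij
      fin_cases i <;> fin_cases j <;> simp_all [eq_comm]
    · intro i
      fin_cases i <;> simp [hpow u₁ hk1, hpow u₂ hk2, hpow u₃ hk3]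
    · rw [Fin.sum_univ_four]
      simpa using hrel
  · rintro ⟨v, hinj, hu, hsum⟩
    exact aux_no_four hchar m v hinj hu hsum
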